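/- Let r be an odd prime and a, b integers with r dividing a + b. Then φ_r(a,b) := (a^r + b^r)/(a+b) satisfies φ_r(a,b) ≡ r·a^{r-1} (mod r^2). -/

import Mathlib

open Finset

private lemma sum_modEq {n : ℤ} {s : Finset ℕ} {f g : ℕ → ℤ}
    (h : ∀ i ∈ s, f i ≡ g i [ZMOD n]) :
    (∑ i ∈ s, f i) ≡ (∑ i ∈ s, g i) [ZMOD n] := by
  classical
  induction s using Finset.induction with
  | empty => simp
  | insert _ _ hx ih =>
    rw [Finset.sum_insert hx, Finset.sum_insert hx]
    exact (h _ (Finset.mem_insert_self _ _)).add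
      (ih fun i hi => h i (Finset.mem_insert_of_mem hi))

private lemma pow_modEq (x y : ℤ) : ∀ k : ℕ,
    (x + y) ^ k ≡ x ^ k + k * y * x ^ (k - 1) [ZMOD y ^ 2] := by
  intro k
  induction k with
  | zero => simp
  | succ n ih =>
    have h1 : (x + y) ^ (n + 1) = (x + y) ^ n * (x + y) := pow_succ _ _
    have h2 : (x + y) ^ n * (x + y) ≡ (x ^ n + n * y * x ^ (n - 1)) * (x + y) [ZMOD y ^ 2] :=
      ih.mul_right _
    rw [h1]
    refine h2.trans ?_
    rcases n with _ | m
    · simp [Int.ModEq]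
    · refine Int.modEq_iff_dvd.mpr ?_
      have : (x ^ (m + 1 + 1) + (↑(m + 1 + 1)) * y * x ^ (m + 1 + 1 - 1))
          - (x ^ (m + 1) + (↑(m + 1)) * y * x ^ (m + 1 - 1)) * (x + y)
          = y ^ 2 * (-(m + 1) * x ^ m) := by
        push_cast
        ring
      rw [this]
      exact Dvd.intro _ rfl

/-- Let `r` be an odd prime and `a, b` integers with `r ∣ a + b`. Then
`φ_r(a,b) = ∑_{k=0}^{r-1} (-1)^k a^(r-1-k) b^k` satisfies
`φ_r(a,b) ≡ r·a^(r-1) (mod r²)`. -/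
theorem phi_r_congruence (r : ℕ) (hr : r.Prime) (hodd : Odd r)
    (a b : ℤ) (hdvd : (r : ℤ) ∣ a + b) :
    (∑ k ∈ Finset.range r, (-1 : ℤ) ^ k * a ^ (r - 1 - k) * b ^ k) ≡
      (r : ℤ) * a ^ (r - 1) [ZMOD ((r : ℤ) ^ 2)] := by
  obtain ⟨c, hc⟩ := hdvd
  have hb : b = -a + (r : ℤ) * c := by linarith
  have key : ∀ k ∈ Finset.range r, (-1 : ℤ) ^ k * a ^ (r - 1 - k) * b ^ k ≡
      a ^ (r - 1) - (k : ℤ) * ((r : ℤ) * c) * a ^ (r - 2) [ZMOD ((r : ℤ) ^ 2)] := by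
    intro k hk
    have hk' : k < r := Finset.mem_range.mp hk
    have h1 : b ^ k ≡ (-a) ^ k + (k : ℤ) * ((r : ℤ) * c) * (-a) ^ (k - 1)
        [ZMOD ((r : ℤ) * c) ^ 2] := by
      rw [hb]; simpa using pow_modEq (-a) ((r : ℤ) * c) k
    have h2 : ((r : ℤ) ^ 2) ∣ ((r : ℤ) * c) ^ 2 := ⟨c ^ 2, by ring⟩
    have h4 := (h1.of_dvd h2).mul_left ((-1 : ℤ) ^ k * a ^ (r - 1 - k))
    refine h4.trans ?_
    rcases Nat.eq_zero_or_pos k with h0 | hpos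
    · subst h0; simp
    · have e1 : r - 1 - k + k = r - 1 := by omega
      have e2 : r - 1 - k + (k - 1) = r - 2 := by omega
      have hs1 : ((-1 : ℤ)) ^ k * (-1 : ℤ) ^ k = 1 := by
        rw [← pow_add]; exact Even.neg_one_pow ⟨k, by ring⟩
      have hs2 : ((-1 : ℤ)) ^ k * (-1 : ℤ) ^ (k - 1) = -1 := by
        rw [← pow_add]; exact Odd.neg_one_pow ⟨k - 1, by omega⟩
      have : ((-1 : ℤ) ^ k * a ^ (r - 1 - k)) *
          ((-a) ^ k + (k : ℤ) * ((r : ℤ) * c) * (-a) ^ (k - 1)) =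
          a ^ (r - 1) - (k : ℤ) * ((r : ℤ) * c) * a ^ (r - 2) := by
        rw [neg_pow a k, neg_pow a (k - 1)]
        calc ((-1 : ℤ) ^ k * a ^ (r - 1 - k)) *
              ((-1 : ℤ) ^ k * a ^ k + (k : ℤ) * ((r : ℤ) * c) * ((-1 : ℤ) ^ (k - 1) * a ^ (k - 1)))
            = ((-1 : ℤ) ^ k * (-1 : ℤ) ^ k) * (a ^ (r - 1 - k) * a ^ k)
              + ((k : ℤ) * ((r : ℤ) * c)) *
                (((-1 : ℤ) ^ k * (-1 : ℤ) ^ (k - 1)) * (a ^ (r - 1 - k) * a ^ (k - 1))) := by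
              ring
          _ = a ^ (r - 1) - (k : ℤ) * ((r : ℤ) * c) * a ^ (r - 2) := by
              rw [hs1, hs2, ← pow_add, ← pow_add, e1, e2]; ring
      rw [this]
  have hsum := sum_modEq key
  have eS : (∑ k ∈ Finset.range r, ((a : ℤ) ^ (r - 1) - (k : ℤ) * ((r : ℤ) * c) * a ^ (r - 2)))
      = (r : ℤ) * a ^ (r - 1)
        - (∑ k ∈ Finset.range r, (k : ℤ)) * (((r : ℤ) * c) * a ^ (r - 2)) := by
    rw [Finset.sum_sub_distrib, Finset.sum_const, Finset.card_range, Finset.sum_mul]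
    simp [nsmul_eq_mul, mul_assoc]
  rw [eS] at hsum
  refine hsum.trans ?_
  obtain ⟨m, hm⟩ := hodd
  have hdS : (r : ℤ) ∣ ∑ k ∈ Finset.range r, (k : ℤ) := by
    have : (∑ k ∈ Finset.range r, k) = r * m := by
      have h2 : (∑ k ∈ Finset.range r, k) * 2 = (r * m) * 2 := by
        rw [Finset.sum_range_id_mul_two, hm]
        simp only [Nat.add_sub_cancel]
        ring
      exact Nat.eq_of_mul_eq_mul_right (by norm_num) h2
    have : (∑ k ∈ Finset.range r, (k : ℤ)) = (r : ℤ) * m := by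
      rw [← Nat.cast_sum, this]; push_cast; ring
    exact ⟨m, this⟩
  obtain ⟨t, ht⟩ := hdS
  refine (Int.modEq_iff_dvd.mpr ?_).symm
  refine ⟨-(t * c * a ^ (r - 2)), ?_⟩
  rw [ht]; ring
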